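/- arXiv:0906.1018 — 2 statements merged into one kernel-verified Lean document; each statement's English description precedes it below -/
import Mathlib

section
/- For every positive integer n, the product ∏_{1 ≤ i ≤ j ≤ k ≤ n} (i+j+k-1)/(i+j+k-2) is a positive integer. -/
/-- The product `∏_{1 ≤ i ≤ j ≤ k ≤ n} (i+j+k-1)/(i+j+k-2)` of rational numbers. -/
def tsppProd (n : ℕ) : ℚ :=
  ∏ k ∈ Finset.Icc 1 n, ∏ j ∈ Finset.Icc 1 k, ∏ i ∈ Finset.Icc 1 j,
    (((i : ℚ) + j + k - 1) / ((i : ℚ) + j + k - 2))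

namespace TSPPAux

open Finset Nat


/-- counting: sum of indicator over range -/
lemma count_lemma (n T : ℕ) (P : ℕ → Prop) [DecidablePred P]
    (h : ∀ t, t < n → (P t ↔ T ≤ t)) :
    (∑ t ∈ range n, if P t then 1 else 0) = n - min T n := by
  rw [Finset.sum_boole]
  have : (range n).filter P = Ico (min T n) n := by
    ext x
    simp only [mem_filter, mem_range, mem_Ico]
    constructor
    · rintro ⟨hx, hp⟩; have := (h x hx).mp hp; omega
    · rintro ⟨h1, h2⟩; exact ⟨h2, (h x h2).mpr (by omega)⟩
  rw [this, Nat.card_Ico]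
  simp

lemma div_small2 (q x : ℕ) (h : x < 2*q) : x/q = if q ≤ x then 1 else 0 := by
  split
  · exact Nat.div_eq_of_lt_le (by omega) (by omega)
  · exact Nat.div_eq_of_lt (by omega)

lemma div_small3 (q x : ℕ) (h : x < 3*q) :
    x/q = (if q ≤ x then 1 else 0) + (if 2*q ≤ x then 1 else 0) := by
  rcases Nat.lt_or_ge x q with h1 | h1
  · rw [Nat.div_eq_of_lt h1, if_neg (by omega), if_neg (by omega)]
  rcases Nat.lt_or_ge x (2*q) with h2 | h2
  · have : x/q = 1 := Nat.div_eq_of_lt_le (by omega) (by omega)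
    rw [this, if_pos h1, if_neg (by omega)]
  · have : x/q = 2 := Nat.div_eq_of_lt_le (by omega) (by omega)
    rw [this, if_pos h1, if_pos h2]

/-- shifting the constant by the step adds `s` to the period sum -/
lemma sum_shift (q s a : ℕ) (hq : 0 < q) :
    (∑ t ∈ range q, (a + s + s*t)/q) = (∑ t ∈ range q, (a + s*t)/q) + s := by
  have e1 : ∑ t ∈ range (q+1), (a + s*t)/q
      = (∑ t ∈ range q, (a + s*(t+1))/q) + (a + s*0)/q := Finset.sum_range_succ' _ _
  have e2 : ∑ t ∈ range (q+1), (a + s*t)/q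
      = (∑ t ∈ range q, (a + s*t)/q) + (a + s*q)/q := Finset.sum_range_succ _ _
  have e3 : (a + s*q)/q = a/q + s := by
    rw [mul_comm s q]; exact Nat.add_mul_div_left a s hq
  have e4 : (∑ t ∈ range q, (a + s*(t+1))/q) = ∑ t ∈ range q, (a + s + s*t)/q := by
    apply Finset.sum_congr rfl; intro t _; congr 1; ring
  simp only [mul_zero, add_zero] at e1
  omega

lemma F1 (q : ℕ) (hq : 0 < q) : ∀ a, (∑ t ∈ range q, (a + t)/q) = a := by
  intro a
  induction a with
  | zero =>
    apply Finset.sum_eq_zero; intro t ht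
    exact Nat.div_eq_of_lt (by simpa using (mem_range.mp ht))
  | succ a ih =>
    have := sum_shift q 1 a hq
    simp only [one_mul] at this
    have e : (∑ t ∈ range q, (a + 1 + t)/q) = ∑ t ∈ range q, (a + 1 + 1*t)/q := by
      apply Finset.sum_congr rfl; intro t _; congr 1; ring
    have e2 : (∑ t ∈ range q, (a + 1*t)/q) = ∑ t ∈ range q, (a + t)/q := by
      apply Finset.sum_congr rfl; intro t _; congr 1; ring
    omega

lemma F2 (q : ℕ) (hq : 0 < q) : ∀ a, (∑ t ∈ range q, (a + 2*t)/q) = 2*(a/2) + (q + a % 2)/2 := by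
  intro a
  induction a using Nat.strong_induction_on with
  | _ a ih =>
    match a with
    | 0 =>
      have e : (∑ t ∈ range q, (0 + 2*t)/q) = ∑ t ∈ range q, if q ≤ 2*t then 1 else 0 := by
        apply Finset.sum_congr rfl; intro t ht
        have := mem_range.mp ht
        rw [zero_add]; exact div_small2 q _ (by omega)
      rw [e, count_lemma q (q - q/2) _ (fun t ht => by omega)]
      omega
    | 1 =>
      have e : (∑ t ∈ range q, (1 + 2*t)/q) = ∑ t ∈ range q, if q ≤ 1 + 2*t then 1 else 0 := by
        apply Finset.sum_congr rfl; intro t ht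
        have := mem_range.mp ht
        exact div_small2 q _ (by omega)
      rw [e, count_lemma q (q - (q+1)/2) _ (fun t ht => by omega)]
      omega
    | (a+2) =>
      have h1 := sum_shift q 2 a hq
      have h2 := ih a (by omega)
      have e : (∑ t ∈ range q, (a + 2 + 2*t)/q) = ∑ t ∈ range q, (a + 2*(t+1))/q := by
        apply Finset.sum_congr rfl; intro t _; congr 1; ring
      omega

lemma F3 (q : ℕ) (hq : 0 < q) : ∀ a, (∑ t ∈ range q, (a + 3*t)/q)
    = 3*(a/3) + 2*q - (q + 2 - a % 3)/3 - (2*q + 2 - a % 3)/3 := by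
  intro a
  induction a using Nat.strong_induction_on with
  | _ a ih =>
    match a with
    | 0 =>
      have e : (∑ t ∈ range q, (0 + 3*t)/q)
          = ∑ t ∈ range q, ((if q ≤ 3*t then 1 else 0) + (if 2*q ≤ 3*t then 1 else 0)) := by
        apply Finset.sum_congr rfl; intro t ht
        have := mem_range.mp ht
        rw [zero_add]; exact div_small3 q _ (by omega)
      rw [e, Finset.sum_add_distrib,
        count_lemma q ((q+2)/3) _ (fun t ht => by omega),
        count_lemma q ((2*q+2)/3) _ (fun t ht => by omega)]
      norm_num
      omega
    | 1 =>
      have e : (∑ t ∈ range q, (1 + 3*t)/q)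
          = ∑ t ∈ range q, ((if q ≤ 1 + 3*t then 1 else 0) + (if 2*q ≤ 1 + 3*t then 1 else 0)) := by
        apply Finset.sum_congr rfl; intro t ht
        have := mem_range.mp ht
        exact div_small3 q _ (by omega)
      rw [e, Finset.sum_add_distrib,
        count_lemma q ((q+1)/3) _ (fun t ht => by omega),
        count_lemma q ((2*q+1)/3) _ (fun t ht => by omega)]
      norm_num
      omega
    | 2 =>
      have e : (∑ t ∈ range q, (2 + 3*t)/q)
          = ∑ t ∈ range q, ((if q ≤ 2 + 3*t then 1 else 0) + (if 2*q ≤ 2 + 3*t then 1 else 0)) := by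
        apply Finset.sum_congr rfl; intro t ht
        have := mem_range.mp ht
        exact div_small3 q _ (by omega)
      rw [e, Finset.sum_add_distrib,
        count_lemma q (q/3) _ (fun t ht => by omega),
        count_lemma q ((2*q)/3) _ (fun t ht => by omega)]
      norm_num
      omega
    | (a+3) =>
      have h1 := sum_shift q 3 a hq
      have h2 := ih a (by omega)
      have e : (∑ t ∈ range q, (a + 3 + 3*t)/q) = ∑ t ∈ range q, (a + 3*(t+1))/q := by
        apply Finset.sum_congr rfl; intro t _; congr 1; ring
      omega

/-- The key floor-sum inequality, in range form. -/
lemma key (q : ℕ) (hq : 0 < q) : ∀ n : ℕ,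
    (∑ t ∈ range n, ((3*t+1)/q + (n+t)/q)) ≤ ∑ t ∈ range n, ((n+2*t+1)/q + (2*t)/q) := by
  intro n
  induction n using Nat.strong_induction_on with
  | _ n ih =>
    rcases Nat.lt_or_ge n q with hn | hn
    · -- base case n < q
      rcases Nat.eq_zero_or_pos n with rfl | hn0
      · simp
      have e1 : (∑ t ∈ range n, ((3*t+1)/q + (n+t)/q))
          = (∑ t ∈ range n, (3*t+1)/q) + ∑ t ∈ range n, (n+t)/q :=
        Finset.sum_add_distrib
      have e2 : (∑ t ∈ range n, ((n+2*t+1)/q + (2*t)/q))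
          = (∑ t ∈ range n, (n+2*t+1)/q) + ∑ t ∈ range n, (2*t)/q :=
        Finset.sum_add_distrib
      have c1 : (∑ t ∈ range n, (3*t+1)/q)
          = (n - min ((q+1)/3) n) + (n - min ((2*q+1)/3) n) := by
        have : (∑ t ∈ range n, (3*t+1)/q)
            = ∑ t ∈ range n, ((if q ≤ 3*t+1 then 1 else 0) + (if 2*q ≤ 3*t+1 then 1 else 0)) := by
          apply Finset.sum_congr rfl; intro t ht
          have := mem_range.mp ht
          exact div_small3 q _ (by omega)
        rw [this, Finset.sum_add_distrib,
          count_lemma n ((q+1)/3) _ (fun t ht => by omega),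
          count_lemma n ((2*q+1)/3) _ (fun t ht => by omega)]
      have c2 : (∑ t ∈ range n, (n+t)/q) = n - min (q - n) n := by
        have : (∑ t ∈ range n, (n+t)/q)
            = ∑ t ∈ range n, (if q ≤ n+t then 1 else 0) := by
          apply Finset.sum_congr rfl; intro t ht
          have := mem_range.mp ht
          exact div_small2 q _ (by omega)
        rw [this, count_lemma n (q-n) _ (fun t ht => by omega)]
      have c3 : (∑ t ∈ range n, (n+2*t+1)/q)
          = (n - min ((q-n)/2) n) + (n - min ((2*q-n)/2) n) := by
        have : (∑ t ∈ range n, (n+2*t+1)/q)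
            = ∑ t ∈ range n, ((if q ≤ n+2*t+1 then 1 else 0) + (if 2*q ≤ n+2*t+1 then 1 else 0)) := by
          apply Finset.sum_congr rfl; intro t ht
          have := mem_range.mp ht
          exact div_small3 q _ (by omega)
        rw [this, Finset.sum_add_distrib,
          count_lemma n ((q-n)/2) _ (fun t ht => by omega),
          count_lemma n ((2*q-n)/2) _ (fun t ht => by omega)]
      have c4 : (∑ t ∈ range n, (2*t)/q) = n - min (q - q/2) n := by
        have : (∑ t ∈ range n, (2*t)/q)
            = ∑ t ∈ range n, (if q ≤ 2*t then 1 else 0) := by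
          apply Finset.sum_congr rfl; intro t ht
          have := mem_range.mp ht
          exact div_small2 q _ (by omega)
        rw [this, count_lemma n (q - q/2) _ (fun t ht => by omega)]
      omega
    · -- step case q ≤ n
      set m := n - q with hm
      have hmn : n = m + q := by omega
      have ihm := ih m (by omega)
      -- split the sums
      have split : ∀ f : ℕ → ℕ, (∑ t ∈ range n, f t)
          = (∑ t ∈ range m, f t) + ∑ u ∈ range q, f (m + u) := by
        intro f
        rw [Finset.range_eq_Ico, ← Finset.sum_Ico_consecutive f (Nat.zero_le m) (by omega),
          ← Finset.range_eq_Ico, Finset.sum_Ico_eq_sum_range]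
        have hq' : n - m = q := by omega
        rw [hq']
      rw [split, split]
      -- lower part, LHS
      have L1 : (∑ t ∈ range m, ((3*t+1)/q + (n+t)/q))
          = (∑ t ∈ range m, ((3*t+1)/q + (m+t)/q)) + m := by
        have : ∀ t, (3*t+1)/q + (n+t)/q = ((3*t+1)/q + (m+t)/q) + 1 := by
          intro t
          have h' : n + t = (m + t) + q := by omega
          rw [h', Nat.add_div_right _ hq]
          omega
        calc (∑ t ∈ range m, ((3*t+1)/q + (n+t)/q))
            = ∑ t ∈ range m, (((3*t+1)/q + (m+t)/q) + 1) := Finset.sum_congr rfl (fun t _ => this t)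
          _ = (∑ t ∈ range m, ((3*t+1)/q + (m+t)/q)) + m := by
              rw [Finset.sum_add_distrib, Finset.sum_const, Finset.card_range, smul_eq_mul, mul_one]
      have R1 : (∑ t ∈ range m, ((n+2*t+1)/q + (2*t)/q))
          = (∑ t ∈ range m, ((m+2*t+1)/q + (2*t)/q)) + m := by
        have : ∀ t, (n+2*t+1)/q + (2*t)/q = ((m+2*t+1)/q + (2*t)/q) + 1 := by
          intro t
          have h' : n + 2*t + 1 = (m + 2*t + 1) + q := by omega
          rw [h', Nat.add_div_right _ hq]
          omega
        calc (∑ t ∈ range m, ((n+2*t+1)/q + (2*t)/q))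
            = ∑ t ∈ range m, (((m+2*t+1)/q + (2*t)/q) + 1) := Finset.sum_congr rfl (fun t _ => this t)
          _ = (∑ t ∈ range m, ((m+2*t+1)/q + (2*t)/q)) + m := by
              rw [Finset.sum_add_distrib, Finset.sum_const, Finset.card_range, smul_eq_mul, mul_one]
      -- window parts
      have WL : (∑ u ∈ range q, ((3*(m+u)+1)/q + (n+(m+u))/q))
          = (∑ u ∈ range q, ((3*m+1) + 3*u)/q) + ∑ u ∈ range q, ((n+m) + u)/q := by
        rw [← Finset.sum_add_distrib]
        apply Finset.sum_congr rfl; intro u _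
        congr 1 <;> [skip; skip] <;> congr 1 <;> omega
      have WR : (∑ u ∈ range q, ((n+2*(m+u)+1)/q + (2*(m+u))/q))
          = (∑ u ∈ range q, ((n+2*m+1) + 2*u)/q) + ∑ u ∈ range q, ((2*m) + 2*u)/q := by
        rw [← Finset.sum_add_distrib]
        apply Finset.sum_congr rfl; intro u _
        congr 1 <;> [skip; skip] <;> congr 1 <;> omega
      rw [WL, WR, L1, R1, F3 q hq (3*m+1), F1 q hq (n+m), F2 q hq (n+2*m+1), F2 q hq (2*m)]
      rw [show (3*m+1) % 3 = 1 by omega, show (3*m+1)/3 = m by omega,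
        show (2*m) % 2 = 0 by omega, show (2*m)/2 = m by omega,
        show q + 2 - 1 = q + 1 by omega, show 2*q + 2 - 1 = 2*q + 1 by omega,
        show q + 0 = q by omega]
      rcases Nat.mod_two_eq_zero_or_one (n+2*m+1) with h2 | h2 <;> rw [h2] <;>
        [rw [show q + 0 = q by omega]; skip] <;> omega

lemma key_icc (q n : ℕ) (hq : 0 < q) :
    ∑ j ∈ Icc 1 n, ((3*j-2)/q + (n+j-1)/q) ≤ ∑ j ∈ Icc 1 n, ((n+2*j-1)/q + (2*j-2)/q) := by
  have h := key q hq n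
  have e1 : ∑ j ∈ Icc 1 n, ((3*j-2)/q + (n+j-1)/q)
      = ∑ t ∈ range n, ((3*t+1)/q + (n+t)/q) := by
    rw [← Finset.Ico_add_one_right_eq_Icc, Finset.sum_Ico_eq_sum_range, show n + 1 - 1 = n from rfl]
    apply Finset.sum_congr rfl; intro t _
    congr 2 <;> omega
  have e2 : ∑ j ∈ Icc 1 n, ((n+2*j-1)/q + (2*j-2)/q)
      = ∑ t ∈ range n, ((n+2*t+1)/q + (2*t)/q) := by
    rw [← Finset.Ico_add_one_right_eq_Icc, Finset.sum_Ico_eq_sum_range, show n + 1 - 1 = n from rfl]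
    apply Finset.sum_congr rfl; intro t _
    congr 2 <;> omega
  omega

lemma fact_dvd (n : ℕ) :
    (∏ j ∈ Icc 1 n, ((3*j-2)! * (n+j-1)!)) ∣ ∏ j ∈ Icc 1 n, ((n+2*j-1)! * (2*j-2)!) := by
  have hD : (∏ j ∈ Icc 1 n, ((3*j-2)! * (n+j-1)!)) ≠ 0 := by
    apply Finset.prod_ne_zero_iff.mpr; intro j _
    positivity
  have hN : (∏ j ∈ Icc 1 n, ((n+2*j-1)! * (2*j-2)!)) ≠ 0 := by
    apply Finset.prod_ne_zero_iff.mpr; intro j _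
    positivity
  rw [← Nat.factorization_le_iff_dvd hD hN, Finsupp.le_def]
  intro p
  by_cases hp : p.Prime
  · haveI := Fact.mk hp
    have hfact : ∀ x : ℕ, x ≤ 3*n →
        (x !).factorization p = ∑ i ∈ Ico 1 (3*n+1), x / p^i := by
      intro x hx
      rw [Nat.factorization_def _ hp]
      exact padicValNat_factorial (lt_of_le_of_lt (Nat.log_le_self p x) (by omega))
    rw [Nat.factorization_prod (fun j _ => by positivity),
        Nat.factorization_prod (fun j _ => by positivity),
        Finset.sum_apply', Finset.sum_apply']
    have eL : ∑ j ∈ Icc 1 n, (((3*j-2)! * (n+j-1)!).factorization) p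
        = ∑ i ∈ Ico 1 (3*n+1), ∑ j ∈ Icc 1 n, ((3*j-2)/p^i + (n+j-1)/p^i) := by
      rw [Finset.sum_comm]
      apply Finset.sum_congr rfl; intro j hj
      have hj' := mem_Icc.mp hj
      rw [Nat.factorization_mul (factorial_ne_zero _) (factorial_ne_zero _), Finsupp.add_apply,
        hfact _ (by omega), hfact _ (by omega), ← Finset.sum_add_distrib]
    have eR : ∑ j ∈ Icc 1 n, (((n+2*j-1)! * (2*j-2)!).factorization) p
        = ∑ i ∈ Ico 1 (3*n+1), ∑ j ∈ Icc 1 n, ((n+2*j-1)/p^i + (2*j-2)/p^i) := by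
      rw [Finset.sum_comm]
      apply Finset.sum_congr rfl; intro j hj
      have hj' := mem_Icc.mp hj
      rw [Nat.factorization_mul (factorial_ne_zero _) (factorial_ne_zero _), Finsupp.add_apply,
        hfact _ (by omega), hfact _ (by omega), ← Finset.sum_add_distrib]
    rw [eL, eR]
    apply Finset.sum_le_sum
    intro i _
    exact key_icc (p^i) n (Nat.pow_pos hp.pos)
  · simp [Nat.factorization_eq_zero_of_not_prime _ hp]

/-- telescoping product -/
lemma tele (c : ℕ) (hc : 1 ≤ c) (m : ℕ) :
    ∏ i ∈ Icc 1 m, (((i:ℚ)+c)/((i:ℚ)+c-1)) = ((m:ℚ)+c)/(c:ℚ) := by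
  induction m with
  | zero =>
    simp only [Icc_eq_empty_of_lt (by omega : (0:ℕ) < 1), Finset.prod_empty, Nat.cast_zero,
      zero_add]
    rw [div_self (show (c:ℚ) ≠ 0 from Nat.cast_ne_zero.mpr (by omega))]
  | succ m ih =>
    rw [Finset.prod_Icc_succ_top (by omega : 1 ≤ m + 1), ih]
    have h1 : ((m:ℚ)+1+c-1) = (m:ℚ)+c := by push_cast; ring
    have h2 : ((m:ℚ)+c) ≠ 0 := by positivity
    have h3 : (c:ℚ) ≠ 0 := by positivity
    push_cast
    rw [h1]
    field_simp

lemma prod_fact (c a : ℕ) : ∀ b, a ≤ b → (a+c)! * (∏ k ∈ Icc (a+1) b, (k+c)) = (b+c)! := by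
  intro b hb
  induction b, hb using Nat.le_induction with
  | base => rw [Finset.Icc_eq_empty (by omega)]; simp
  | succ b hb ih =>
    rw [Finset.prod_Icc_succ_top (by omega), ← mul_assoc, ih,
      show b + 1 + c = (b + c) + 1 by omega, factorial_succ]
    ring

lemma inner_prod (j k : ℕ) (hj : 1 ≤ j) (hk : 1 ≤ k) :
    ∏ i ∈ Icc 1 j, (((i:ℚ)+j+k-1)/((i:ℚ)+j+k-2)) = ((2*j+k-1 : ℕ):ℚ)/((j+k-1 : ℕ):ℚ) := by
  have hc : ((j+k-1 : ℕ):ℚ) = (j:ℚ)+k-1 := by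
    push_cast [Nat.cast_sub (show 1 ≤ j+k by omega)]; ring
  have hn : ((2*j+k-1 : ℕ):ℚ) = (j:ℚ)+((j:ℚ)+k-1) := by
    push_cast [Nat.cast_sub (show 1 ≤ 2*j+k by omega)]; ring
  have h := tele (j+k-1) (by omega) j
  rw [hc] at h ⊢
  rw [hn, ← h]
  apply Finset.prod_congr rfl
  intro i _
  congr 1 <;> [skip; skip]
  · ring
  · ring
lemma tspp_eq (n : ℕ) :
    tsppProd n = ((∏ j ∈ Icc 1 n, ((n+2*j-1)! * (2*j-2)!) : ℕ) : ℚ)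
      / ((∏ j ∈ Icc 1 n, ((3*j-2)! * (n+j-1)!) : ℕ) : ℚ) := by
  have s1 : tsppProd n
      = ∏ k ∈ Icc 1 n, ∏ j ∈ Icc 1 k, (((2*j+k-1 : ℕ):ℚ)/((j+k-1 : ℕ):ℚ)) := by
    apply Finset.prod_congr rfl; intro k hk
    apply Finset.prod_congr rfl; intro j hj
    exact inner_prod j k (mem_Icc.mp hj).1 (mem_Icc.mp hk).1
  have s2 : (∏ k ∈ Icc 1 n, ∏ j ∈ Icc 1 k, (((2*j+k-1 : ℕ):ℚ)/((j+k-1 : ℕ):ℚ)))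
      = ∏ j ∈ Icc 1 n, ∏ k ∈ Icc j n, (((2*j+k-1 : ℕ):ℚ)/((j+k-1 : ℕ):ℚ)) := by
    apply Finset.prod_comm'
    intro k j
    simp only [mem_Icc]
    omega
  have s3 : ∀ j ∈ Icc 1 n, (∏ k ∈ Icc j n, (((2*j+k-1 : ℕ):ℚ)/((j+k-1 : ℕ):ℚ)))
      = (((n+2*j-1)! * (2*j-2)! : ℕ):ℚ) / (((3*j-2)! * (n+j-1)! : ℕ):ℚ) := by
    intro j hj
    have hj' := mem_Icc.mp hj
    have num : (3*j-2)! * (∏ k ∈ Icc j n, (2*j+k-1)) = (n+2*j-1)! := by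
      have h := prod_fact (2*j-1) (j-1) n (by omega)
      rw [show (j-1)+1 = j by omega, show (j-1)+(2*j-1) = 3*j-2 by omega,
        show n+(2*j-1) = n+2*j-1 by omega] at h
      rw [← h]
      congr 1
      apply Finset.prod_congr rfl; intro k hk
      have := mem_Icc.mp hk
      omega
    have den : (2*j-2)! * (∏ k ∈ Icc j n, (j+k-1)) = (n+j-1)! := by
      have h := prod_fact (j-1) (j-1) n (by omega)
      rw [show (j-1)+1 = j by omega, show (j-1)+(j-1) = 2*j-2 by omega,
        show n+(j-1) = n+j-1 by omega] at h
      rw [← h]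
      congr 1
      apply Finset.prod_congr rfl; intro k hk
      have := mem_Icc.mp hk
      omega
    rw [Finset.prod_div_distrib, ← Nat.cast_prod, ← Nat.cast_prod]
    have hden : ((∏ k ∈ Icc j n, (j+k-1) : ℕ):ℚ) ≠ 0 := by
      rw [Nat.cast_ne_zero]
      apply Finset.prod_ne_zero_iff.mpr
      intro k hk
      have := mem_Icc.mp hk
      omega
    have hD2 : (((3*j-2)! * (n+j-1)! : ℕ):ℚ) ≠ 0 := by
      rw [Nat.cast_ne_zero]
      positivity
    rw [div_eq_div_iff hden hD2]
    have e : (∏ k ∈ Icc j n, (2*j+k-1)) * ((3*j-2)! * (n+j-1)!)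
        = ((n+2*j-1)! * (2*j-2)!) * (∏ k ∈ Icc j n, (j+k-1)) := by
      calc (∏ k ∈ Icc j n, (2*j+k-1)) * ((3*j-2)! * (n+j-1)!)
          = ((3*j-2)! * ∏ k ∈ Icc j n, (2*j+k-1)) * (n+j-1)! := by ring
        _ = (n+2*j-1)! * (n+j-1)! := by rw [num]
        _ = (n+2*j-1)! * ((2*j-2)! * ∏ k ∈ Icc j n, (j+k-1)) := by rw [den]
        _ = ((n+2*j-1)! * (2*j-2)!) * (∏ k ∈ Icc j n, (j+k-1)) := by ring
    exact_mod_cast e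
  rw [s1, s2, Finset.prod_congr rfl s3, Finset.prod_div_distrib, ← Nat.cast_prod, ← Nat.cast_prod]

end TSPPAux

open Finset Nat TSPPAux in
/-- For every positive integer `n`, the product
`∏_{1 ≤ i ≤ j ≤ k ≤ n} (i+j+k-1)/(i+j+k-2)` is a positive integer. -/
theorem tspp_product_is_positive_integer (n : ℕ) (hn : 1 ≤ n) :
    ∃ m : ℕ, 0 < m ∧ tsppProd n = (m : ℚ) := by
  have hdvd := fact_dvd n
  have hDpos : 0 < ∏ j ∈ Icc 1 n, ((3*j-2)! * (n+j-1)!) :=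
    Finset.prod_pos fun j _ => mul_pos (factorial_pos _) (factorial_pos _)
  have hNpos : 0 < ∏ j ∈ Icc 1 n, ((n+2*j-1)! * (2*j-2)!) :=
    Finset.prod_pos fun j _ => mul_pos (factorial_pos _) (factorial_pos _)
  refine ⟨(∏ j ∈ Icc 1 n, ((n+2*j-1)! * (2*j-2)!)) / (∏ j ∈ Icc 1 n, ((3*j-2)! * (n+j-1)!)),
    Nat.div_pos (Nat.le_of_dvd hNpos hdvd) hDpos, ?_⟩
  rw [tspp_eq n, Nat.cast_div_charZero hdvd]
end

section
/- For every integer n ≥ 1, Nice(n)/Nice(n−1) = 4^{1−n} (3n−1)^2 (2n)_{n−1}^2 / ((3n−2)^2 (n/2)_{n−1}^2), where Nice(n) = ∏_{1 ≤ i ≤ j ≤ k ≤ n} ((i+j+k−1)/(i+j+k−2))^2 and (x)_m denotes the rising factorial (Pochhammer symbol). -/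
/-- `Nice(n) = ∏_{1 ≤ i ≤ j ≤ k ≤ n} ((i+j+k-1)/(i+j+k-2))^2` (so `Nice 0 = 1`). -/
def Nice (n : ℕ) : ℚ :=
  ∏ k ∈ Finset.Icc 1 n, ∏ j ∈ Finset.Icc 1 k, ∏ i ∈ Finset.Icc 1 j,
    (((i : ℚ) + j + k - 1) / ((i : ℚ) + j + k - 2)) ^ 2

/-- The rising factorial (Pochhammer symbol) `(x)_m = x(x+1)⋯(x+m-1)` over ℚ. -/
def risingFac (x : ℚ) (m : ℕ) : ℚ := ∏ i ∈ Finset.range m, (x + i)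

lemma risingFac_succ (x : ℚ) (m : ℕ) : risingFac x (m+1) = risingFac x m * (x + m) :=
  Finset.prod_range_succ _ _

lemma risingFac_pos {x : ℚ} (hx : 0 < x) (m : ℕ) : 0 < risingFac x m :=
  Finset.prod_pos fun i _ => by positivity

lemma risingFac_add (x : ℚ) (a b : ℕ) :
    risingFac x (a + b) = risingFac x a * risingFac (x + a) b := by
  induction b with
  | zero => simp [risingFac]
  | succ b ih =>
    rw [← Nat.add_assoc, risingFac_succ, ih, risingFac_succ]
    push_cast; ring

lemma risingFac_dup (x : ℚ) (m : ℕ) :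
    risingFac (x/2) m * risingFac ((x+1)/2) m * 4^m = risingFac x (2*m) := by
  induction m with
  | zero => simp [risingFac]
  | succ m ih =>
    have h : 2 * (m+1) = 2*m + 1 + 1 := by ring
    rw [h, risingFac_succ, risingFac_succ, risingFac_succ, risingFac_succ, ← ih]
    push_cast; ring

lemma tel (c : ℚ) (hc : 0 < c) (j : ℕ) :
    ∏ i ∈ Finset.Icc 1 j, (((i:ℚ)+c)/((i:ℚ)+c-1)) = ((j:ℚ)+c)/c := by
  induction j with
  | zero => simp [div_self hc.ne']
  | succ j ih =>
    rw [Finset.prod_Icc_succ_top (by omega : 1 ≤ j+1), ih]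
    have h1 : (j:ℚ) + c ≠ 0 := by positivity
    push_cast
    have h2 : (j:ℚ) + 1 + c - 1 = (j:ℚ) + c := by ring
    rw [h2]
    field_simp

lemma prodL1 (c : ℚ) (m : ℕ) :
    ∏ j ∈ Finset.Icc 1 m, (2*(j:ℚ)+c) = 2^m * risingFac ((c+2)/2) m := by
  induction m with
  | zero => simp [risingFac]
  | succ m ih =>
    rw [Finset.prod_Icc_succ_top (by omega : 1 ≤ m+1), ih, risingFac_succ]
    push_cast; ring

lemma prodL2 (c : ℚ) (m : ℕ) :
    ∏ j ∈ Finset.Icc 1 m, ((j:ℚ)+c) = risingFac (c+1) m := by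
  induction m with
  | zero => simp [risingFac]
  | succ m ih =>
    rw [Finset.prod_Icc_succ_top (by omega : 1 ≤ m+1), ih, risingFac_succ]
    push_cast; ring

lemma nice_pos (n : ℕ) : 0 < Nice n := by
  unfold Nice
  refine Finset.prod_pos fun k hk => Finset.prod_pos fun j hj => Finset.prod_pos fun i hi => ?_
  have hk1 := (Finset.mem_Icc.mp hk).1
  have hj1 := (Finset.mem_Icc.mp hj).1
  have hi1 := (Finset.mem_Icc.mp hi).1
  have h3 : (3:ℚ) ≤ (i:ℚ) + j + k := by
    have : (3:ℕ) ≤ i + j + k := by omega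
    exact_mod_cast this
  have h1 : 0 < (i:ℚ) + j + k - 1 := by linarith
  have h2 : 0 < (i:ℚ) + j + k - 2 := by linarith
  positivity

lemma ratio_prod (m : ℕ) :
    Nice (m+1) / Nice m =
      ((2:ℚ)^(m+1) * risingFac (((m:ℚ)+2)/2) (m+1) / risingFac ((m:ℚ)+1) (m+1)) ^ 2 := by
  have hstep : Nice (m+1) = Nice m * ∏ j ∈ Finset.Icc 1 (m+1), ∏ i ∈ Finset.Icc 1 j,
      (((i : ℚ) + j + ((m+1 : ℕ):ℚ) - 1) / ((i : ℚ) + j + ((m+1 : ℕ):ℚ) - 2)) ^ 2 := by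
    unfold Nice
    rw [Finset.prod_Icc_succ_top (by omega : 1 ≤ m+1)]
  rw [hstep, mul_comm, mul_div_assoc, div_self (nice_pos m).ne', mul_one]
  simp only [Finset.prod_pow]
  congr 1
  have step1 : ∀ j ∈ Finset.Icc 1 (m+1),
      (∏ i ∈ Finset.Icc 1 j, (((i : ℚ) + j + ((m+1 : ℕ):ℚ) - 1) / ((i : ℚ) + j + ((m+1 : ℕ):ℚ) - 2)))
        = (2*(j:ℚ)+m) / ((j:ℚ)+m) := by
    intro j hj
    have hj1 : 1 ≤ j := (Finset.mem_Icc.mp hj).1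
    have hc : (0:ℚ) < (j:ℚ) + m := by
      have : (1:ℚ) ≤ (j:ℚ) := by exact_mod_cast hj1
      linarith [Nat.cast_nonneg (α := ℚ) m]
    have := tel ((j:ℚ)+m) hc j
    rw [show (2*(j:ℚ)+m) / ((j:ℚ)+m) = ((j:ℚ)+((j:ℚ)+m))/((j:ℚ)+m) from by ring, ← this]
    refine Finset.prod_congr rfl fun i hi => ?_
    push_cast
    ring_nf
  calc ∏ j ∈ Finset.Icc 1 (m+1), ∏ i ∈ Finset.Icc 1 j,
        (((i : ℚ) + j + ((m+1 : ℕ):ℚ) - 1) / ((i : ℚ) + j + ((m+1 : ℕ):ℚ) - 2))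
      = ∏ j ∈ Finset.Icc 1 (m+1), ((2*(j:ℚ)+m) / ((j:ℚ)+m)) := Finset.prod_congr rfl step1
    _ = (∏ j ∈ Finset.Icc 1 (m+1), (2*(j:ℚ)+m)) / (∏ j ∈ Finset.Icc 1 (m+1), ((j:ℚ)+m)) :=
        Finset.prod_div_distrib _ _
    _ = (2:ℚ)^(m+1) * risingFac (((m:ℚ)+2)/2) (m+1) / risingFac ((m:ℚ)+1) (m+1) := by
        rw [prodL1, prodL2]

/-- For every integer `n ≥ 1`,
`Nice(n)/Nice(n-1) = 4^{1-n} (3n-1)^2 (2n)_{n-1}^2 / ((3n-2)^2 (n/2)_{n-1}^2)`. -/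
theorem nice_ratio (n : ℕ) (hn : 1 ≤ n) :
    Nice n / Nice (n - 1) =
      (4 : ℚ) ^ ((1 : ℤ) - n) * (3 * (n : ℚ) - 1) ^ 2 * risingFac (2 * n) (n - 1) ^ 2 /
        ((3 * (n : ℚ) - 2) ^ 2 * risingFac ((n : ℚ) / 2) (n - 1) ^ 2) := by
  obtain ⟨m, rfl⟩ : ∃ m, n = m + 1 := ⟨n - 1, by omega⟩
  simp only [Nat.add_sub_cancel]
  rw [ratio_prod]
  have hz : (4:ℚ) ^ ((1:ℤ) - ((m+1:ℕ):ℤ)) = ((4:ℚ)^m)⁻¹ := by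
    have h : (1:ℤ) - ((m+1:ℕ):ℤ) = -(m:ℤ) := by push_cast; ring
    rw [h, zpow_neg, zpow_natCast]
  rw [hz]
  push_cast
  set q : ℚ := (m:ℚ) with hq
  have hq0 : 0 ≤ q := Nat.cast_nonneg m
  -- abbreviations
  have hA : risingFac ((q+2)/2) (m+1) = risingFac ((q+2)/2) m * ((3*q+2)/2) := by
    rw [risingFac_succ, ← hq]; ring_nf
  have hdup : risingFac ((q+1)/2) m * risingFac ((q+2)/2) m * 4^m
      = risingFac (q+1) (2*m) := by
    have := risingFac_dup (q+1) m
    rw [show (q+1+1)/2 = (q+2)/2 from by ring] at this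
    exact this
  have hsplit : risingFac (q+1) (m+1) * risingFac (2*(q+1)) m = risingFac (q+1) (2*m+1) := by
    have := risingFac_add (q+1) (m+1) m
    rw [show (m+1) + m = 2*m+1 from by omega] at this
    rw [this]
    congr 1
    push_cast; rw [← hq]; ring
  have htop : risingFac (q+1) (2*m+1) = risingFac (q+1) (2*m) * (3*q+1) := by
    rw [risingFac_succ]
    congr 1
    push_cast; ring
  have hBC : risingFac (q+1) (m+1) * risingFac (2*(q+1)) m
      = risingFac ((q+1)/2) m * risingFac ((q+2)/2) m * 4^m * (3*q+1) := by
    rw [hsplit, htop, hdup]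
  have hB : (0:ℚ) < risingFac (q+1) (m+1) := risingFac_pos (by linarith) _
  have hD : (0:ℚ) < risingFac ((q+1)/2) m := risingFac_pos (by linarith) _
  have h31 : (3*q+1 : ℚ) ≠ 0 := by positivity
  have h32 : (3*(q+1)-2 : ℚ) ≠ 0 := by
    rw [show 3*(q+1)-2 = 3*q+1 from by ring]; exact h31
  have h4 : ((4:ℚ)^m) ≠ 0 := by positivity
  have hBC2 : (risingFac (q+1) (m+1) * risingFac (2*(q+1)) m)^2
      = (risingFac ((q+1)/2) m * risingFac ((q+2)/2) m * 4^m * (3*q+1))^2 := by rw [hBC]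
  have h2sq : ((2:ℚ)^(m+1))^2 = 4 * 4^m := by
    rw [← pow_mul, show (4:ℚ) = 2^2 from by norm_num, ← pow_mul]
    ring_nf
  rw [hA, div_pow, mul_pow, h2sq]
  field_simp
  linear_combination (-4) * (3*q+2)^2 * hBC2
end
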